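/- Binomial ratio bound: for all naturals N, k, w with 1 ≤ k < N and 0 ≤ w ≤ k, one has C(N−k, w) / C(N, k) < (N/k − 1)^{w−k}, where C(·,·) denotes the binomial coefficient and the right-hand side is the real power ((N−k)/k)^{w−k} with a possibly negative integer exponent. -/

import Mathlib

lemma step_lemma (m k j : ℕ) (hk : 1 ≤ k) (hj : j + 1 ≤ k) :
    (m + j).choose j * m < (m + j + 1).choose (j + 1) * k := by
  have hpos : 0 < (m + j).choose j := Nat.choose_pos (by omega)
  have hid : (m + j + 1) * (m + j).choose j = (m + j + 1).choose (j + 1) * (j + 1) := by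
    simpa using Nat.add_one_mul_choose_eq (m + j) j
  have h2 : m * (j + 1) < (m + j + 1) * k := by nlinarith
  have h1 : (m + j).choose j * m * (j + 1) < (m + j + 1).choose (j + 1) * k * (j + 1) := by
    calc (m + j).choose j * m * (j + 1) = (m + j).choose j * (m * (j + 1)) := by ring
    _ < (m + j).choose j * ((m + j + 1) * k) := mul_lt_mul_of_pos_left h2 hpos
    _ = ((m + j + 1) * (m + j).choose j) * k := by ring
    _ = (m + j + 1).choose (j + 1) * (j + 1) * k := by rw [hid]
    _ = (m + j + 1).choose (j + 1) * k * (j + 1) := by ring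
  exact Nat.lt_of_mul_lt_mul_right h1

lemma key_lemma (m k : ℕ) (hk : 1 ≤ k) : ∀ d w : ℕ, 1 ≤ d → w + d ≤ k →
    (m + w).choose w * m ^ d < (m + w + d).choose (w + d) * k ^ d := by
  intro d
  induction d with
  | zero => intro w h; omega
  | succ d ih =>
    intro w _ hwd
    rcases Nat.eq_zero_or_pos d with rfl | hd'
    · simpa using step_lemma m k w hk (by omega)
    rcases Nat.eq_zero_or_pos m with rfl | hm
    · have hcp : 0 < (0 + w + (d + 1)).choose (w + (d + 1)) := Nat.choose_pos (by omega)
      have hkp : 0 < k ^ (d + 1) := Nat.pow_pos hk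
      calc (0 + w).choose w * 0 ^ (d + 1) = 0 := by simp [pow_succ]
      _ < _ := Nat.mul_pos hcp hkp
    · have h1 := ih w hd' (by omega)
      have h2 := step_lemma m k (w + d) hk (by omega)
      have he : m + (w + d) = m + w + d := by omega
      rw [he] at h2
      calc (m + w).choose w * m ^ (d + 1) = (m + w).choose w * m ^ d * m := by ring
      _ < (m + w + d).choose (w + d) * k ^ d * m := Nat.mul_lt_mul_of_lt_of_le h1 (le_refl m) hm
      _ = ((m + w + d).choose (w + d) * m) * k ^ d := by ring
      _ ≤ ((m + w + d + 1).choose (w + d + 1) * k) * k ^ d :=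
          Nat.mul_le_mul_right _ (le_of_lt h2)
      _ = (m + w + (d + 1)).choose (w + (d + 1)) * k ^ (d + 1) := by ring_nf

lemma choose_lt_add (m k : ℕ) (hk : 1 ≤ k) : m.choose k < (m + k).choose k := by
  rcases le_or_gt k m with h | h
  · obtain ⟨j, rfl⟩ : ∃ j, k = j + 1 := ⟨k - 1, by omega⟩
    have pascal : (m + 1).choose (j + 1) = m.choose j + m.choose (j + 1) :=
      Nat.choose_succ_succ m j
    have hpos : 0 < m.choose j := Nat.choose_pos (by omega)
    have mono : (m + 1).choose (j + 1) ≤ (m + (j + 1)).choose (j + 1) :=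
      Nat.choose_le_choose _ (by omega)
    omega
  · rw [Nat.choose_eq_zero_of_lt h]
    exact Nat.choose_pos (by omega)

theorem binomial_ratio_bound
    (N k w : ℕ) (hk : 1 ≤ k) (hkN : k < N) (hw : w ≤ k) :
    ((N - k).choose w : ℝ) / (N.choose k : ℝ)
      < ((N : ℝ) / (k : ℝ) - 1) ^ ((w : ℤ) - (k : ℤ)) := by
  set m := N - k with hm
  have hmN : N = m + k := by omega
  have hm1 : 1 ≤ m := by omega
  have hNpos : 0 < N.choose k := Nat.choose_pos (le_of_lt hkN)
  have hNposR : (0 : ℝ) < (N.choose k : ℝ) := by exact_mod_cast hNpos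
  have hkR : (0 : ℝ) < (k : ℝ) := by exact_mod_cast hk
  have hmR : (0 : ℝ) < (m : ℝ) := by exact_mod_cast hm1
  have hr : ((N : ℝ) / (k : ℝ) - 1) = (m : ℝ) / (k : ℝ) := by
    field_simp
    push_cast [hmN]
    ring
  rw [hr]
  have hrpos : (0 : ℝ) < (m : ℝ) / (k : ℝ) := div_pos hmR hkR
  rcases eq_or_lt_of_le hw with rfl | hwlt
  · rw [sub_self, zpow_zero, div_lt_one hNposR]
    have := choose_lt_add m w hk
    rw [← hmN] at this
    exact_mod_cast this
  · set d := k - w with hd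
    have hd1 : 1 ≤ d := by omega
    have hwd : w + d = k := by omega
    have hexp : (w : ℤ) - (k : ℤ) = -(d : ℤ) := by omega
    rw [hexp, zpow_neg, zpow_natCast]
    have hnat : m.choose w * m ^ d < N.choose k * k ^ d := by
      have h1 := key_lemma m k hk d w hd1 (by omega)
      have h2 : m.choose w ≤ (m + w).choose w := Nat.choose_le_choose _ (by omega)
      have h3 : m + w + d = N := by omega
      rw [h3, hwd] at h1
      exact lt_of_le_of_lt (Nat.mul_le_mul_right _ h2) h1
    have hreal : (m.choose w : ℝ) * ((m : ℝ) / k) ^ d < (N.choose k : ℝ) := by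
      rw [div_pow, mul_div_assoc', div_lt_iff₀ (pow_pos hkR d)]
      exact_mod_cast hnat
    rw [div_lt_iff₀ hNposR, ← div_eq_inv_mul, lt_div_iff₀ (pow_pos hrpos d)]
    exact hreal
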